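/- arXiv:1509.05991 — 2 statements merged into one kernel-verified Lean document; each statement's English description precedes it below -/
import Mathlib

section
/- Suppose Assumption (*) holds for c and let d ∈ D, u ∈ U_d. Then there exist unique elements q_{u',u} ∈ A, indexed by u' = u and by u' ∈ U_d with u' < u in Bruhat order, such that q_{u,u} = 1, q_{u',u} ∈ A_{<0} for u' ≠ u, and C_d T_u ≡ Σ_{u'} q_{u',u} C_d F_{u'} mod H_{<c}. Consequently, for v ∈ W with v⁻¹ ∈ U_d, T_v C_d ≡ Σ_{v'} q_{v'⁻¹,v⁻¹} E_{v'} C_d mod H_{<c}, the sum over v' ∈ W with v'⁻¹ ∈ U_d and v'⁻¹ equal to v⁻¹ or below it in Bruhat order. -/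
open scoped Classical TensorProduct

noncomputable section

namespace KL

variable (Γ : Type) [AddCommGroup Γ] [LinearOrder Γ] [IsOrderedAddMonoid Γ]

/-- The group ring `A = ℤ[Γ]`. -/
abbrev A := AddMonoidAlgebra ℤ Γ

variable {Γ}

/-- The basis element `q^γ` of `A`. -/
def qe (γ : Γ) : A Γ := AddMonoidAlgebra.single γ 1

/-- `A_{<0}`: the ℤ-span of the `q^γ` with `γ < 0`, i.e. elements supported in negative degrees. -/
def Alt0 (Γ : Type) [AddCommGroup Γ] [LinearOrder Γ] [IsOrderedAddMonoid Γ] : Set (A Γ) :=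
  {a : A Γ | ∀ γ ∈ a.coeff.support, γ < 0}

/-- The degree of an element of `A` (`⊥` for `0`). -/
def adeg (a : A Γ) : WithBot Γ := a.coeff.support.max

variable {B W : Type} [Group W] {M : CoxeterMatrix B}
variable {H : Type} [Ring H]

/-- Bundled data of a Coxeter system `(W,S)` together with a positive weight function `L`,
its Hecke algebra `H` over `A = ℤ[Γ]` with standard basis `T`, the bar involution, and the
Kazhdan-Lusztig basis `C`. -/
structure KLData (M : CoxeterMatrix B) (W : Type) [Group W] (Γ : Type)
    [AddCommGroup Γ] [LinearOrder Γ] [IsOrderedAddMonoid Γ] (H : Type) [Ring H] [Algebra (A Γ) H] where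
  /-- the Coxeter system -/
  cs : CoxeterSystem M W
  /-- the weight function -/
  L : W → Γ
  L_add : ∀ w w' : W, cs.length (w * w') = cs.length w + cs.length w' →
    L (w * w') = L w + L w'
  L_pos : ∀ w : W, w ≠ 1 → 0 < L w
  /-- the standard basis `T_w` of the Hecke algebra -/
  bT : Module.Basis W (A Γ) H
  T_mul : ∀ w w' : W, cs.length (w * w') = cs.length w + cs.length w' →
    bT w * bT w' = bT (w * w')
  T_quad : ∀ i : B,
    (bT (cs.simple i) + algebraMap (A Γ) H (qe (-(L (cs.simple i))))) *
      (bT (cs.simple i) - algebraMap (A Γ) H (qe (L (cs.simple i)))) = 0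
  /-- the bar involution -/
  bar : H →+* H
  bar_bar : ∀ h : H, bar (bar h) = h
  bar_q : ∀ γ : Γ, bar (algebraMap (A Γ) H (qe γ)) = algebraMap (A Γ) H (qe (-γ))
  bar_T : ∀ w : W, bar (bT w) * bT w⁻¹ = 1
  bar_T' : ∀ w : W, bT w⁻¹ * bar (bT w) = 1
  /-- the Kazhdan-Lusztig basis `C_w` -/
  bC : Module.Basis W (A Γ) H
  bar_C : ∀ w : W, bar (bC w) = bC w
  C_mod : ∀ w v : W, bT.repr (bC w - bT w) v ∈ Alt0 Γ

namespace KLData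

variable [Algebra (A Γ) H] (d : KLData M W Γ H)

/-- `T_w` -/
def T (w : W) : H := d.bT w

/-- `C_w` -/
def C (w : W) : H := d.bC w

/-- `H_{<0} = ⊕_w A_{<0} T_w`. -/
def Hlt0 : Set H := {h : H | ∀ w : W, d.bT.repr h w ∈ Alt0 Γ}

/-- The structure constants `h_{x,y,z}` of the KL basis. -/
def hk (x y z : W) : A Γ := d.bC.repr (d.C x * d.C y) z

/-- One step of the preorder `≤_L` : `x` appears in `C_z C_y` for some `z`. -/
def leLstep (x y : W) : Prop := ∃ z : W, d.bC.repr (d.C z * d.C y) x ≠ 0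

/-- The preorder `≤_L`. -/
def leL : W → W → Prop := Relation.ReflTransGen d.leLstep

/-- `x ~_L y` -/
def simL (x y : W) : Prop := d.leL x y ∧ d.leL y x

/-- `x ≤_R y` -/
def leR (x y : W) : Prop := d.leL x⁻¹ y⁻¹

/-- `x ~_R y` -/
def simR (x y : W) : Prop := d.simL x⁻¹ y⁻¹

/-- The preorder `≤_LR`, generated by `≤_L` and `≤_R`. -/
def leLR : W → W → Prop :=
  Relation.ReflTransGen (fun x y => d.leLstep x y ∨ d.leLstep x⁻¹ y⁻¹)

/-- `x ~_LR y` -/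
def simLR (x y : W) : Prop := d.leLR x y ∧ d.leLR y x

/-- left cells -/
def IsLeftCell (Θ : Set W) : Prop := ∃ x : W, Θ = {y | d.simL x y}

/-- right cells -/
def IsRightCell (Φ : Set W) : Prop := ∃ x : W, Φ = {y | d.simR x y}

/-- two-sided cells -/
def IsTwoSidedCell (c : Set W) : Prop := ∃ x : W, c = {y | d.simLR x y}

/-- `z < c` for a two-sided cell `c`. -/
def ltc (c : Set W) (z : W) : Prop := z ∉ c ∧ ∀ w ∈ c, d.leLR z w

/-- `z ≤ c` for a two-sided cell `c`. -/
def lec (c : Set W) (z : W) : Prop := ∀ w ∈ c, d.leLR z w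

/-- The ideal `H_{<c}`, spanned by the `C_z` with `z < c`. -/
def Hltc (c : Set W) : Submodule (A Γ) H :=
  Submodule.span (A Γ) (d.C '' {z : W | d.ltc c z})

/-- Bruhat order on `W`. -/
def bruhatLE : W → W → Prop :=
  Relation.ReflTransGen (fun x y => ∃ t : W, d.cs.IsReflection t ∧ y = x * t ∧
    d.cs.length x < d.cs.length y)

/-- Strict Bruhat order on `W`. -/
def bruhatLT (x y : W) : Prop := d.bruhatLE x y ∧ x ≠ y

/-- Duflo order: `x ≤_D y` iff `l(x⁻¹y) = l(y) - l(x)`. -/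
def dufloLE (x y : W) : Prop :=
  d.cs.length x + d.cs.length (x⁻¹ * y) = d.cs.length y

/-- The `A`-linear anti-automorphism `♭` of `H` with `T_w ↦ T_{w⁻¹}`. -/
def flat : H →ₗ[A Γ] H := d.bT.constr ℕ (fun w => d.bT w⁻¹)

/-- `P_{e,z}` : the coefficient of `T_e` in `C_z`. -/
def Pel (z : W) : A Γ := d.bT.repr (d.C z) 1

/-- `Δ(z)`, defined by `P_{e,z} = n_z q^{-Δ(z)} + lower degree terms`. -/
def Del (z : W) : Γ := -((d.Pel z).coeff.support.max.unbotD 0)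

/-- `n_z`, defined by `P_{e,z} = n_z q^{-Δ(z)} + lower degree terms`. -/
def nz (z : W) : ℤ := (d.Pel z).coeff (-(d.Del z))

/-- `af : W → Γ` is Lusztig's `a`-function iff for each `z`, `af z` is the (attained)
supremum of the degrees of the `h_{x,y,z}`. -/
def IsAFunction (af : W → Γ) : Prop :=
  ∀ z : W, (∀ x y : W, adeg (d.hk x y z) ≤ (af z : WithBot Γ)) ∧
    (∃ x y : W, adeg (d.hk x y z) = (af z : WithBot Γ))

/-- `γ_{x,y,z}` : the coefficient of `q^{a(z⁻¹)}` in `h_{x,y,z⁻¹}`. -/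
def gam (af : W → Γ) (x y z : W) : ℤ := (d.hk x y z⁻¹).coeff (af z⁻¹)

/-- The set `𝒟 = {z | a(z) = Δ(z)}`. -/
def Dset (af : W → Γ) : Set W := {z : W | af z = d.Del z}

end KLData

variable [Algebra (A Γ) H]

/-- Assumption (*): a two-sided cell `c` equipped with subsets `D ⊆ c` and
`B_d, U_d ⊆ W` (`d ∈ D`) satisfying conditions (ia)-(iv). -/
structure CellDecomp (d : KLData M W Γ H) (c : Set W) where
  isCell : d.IsTwoSidedCell c
  D : Set W
  Bd : W → Set W
  Ud : W → Set W
  D_sub : D ⊆ c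
  -- (ia) : c = c⁻¹ = ⊔_{d ∈ D} B_d d U_d (disjoint union)
  c_inv : ∀ w : W, w ∈ c ↔ w⁻¹ ∈ c
  c_eq : c = ⋃ d0 ∈ D, {w : W | ∃ b ∈ Bd d0, ∃ u ∈ Ud d0, w = b * d0 * u}
  disj : ∀ d1 ∈ D, ∀ d2 ∈ D, d1 ≠ d2 →
    Disjoint {w : W | ∃ b ∈ Bd d1, ∃ u ∈ Ud d1, w = b * d1 * u}
             {w : W | ∃ b ∈ Bd d2, ∃ u ∈ Ud d2, w = b * d2 * u}
  -- (ib)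
  len_add : ∀ d0 ∈ D, ∀ b ∈ Bd d0, ∀ u ∈ Ud d0,
    d.cs.length (b * d0 * u) = d.cs.length b + d.cs.length d0 + d.cs.length u
  -- (ic)
  one_mem_B : ∀ d0 ∈ D, (1 : W) ∈ Bd d0
  one_mem_U : ∀ d0 ∈ D, (1 : W) ∈ Ud d0
  Binv_sub_U : ∀ d0 ∈ D, ∀ b ∈ Bd d0, b⁻¹ ∈ Ud d0
  -- (id)
  not_mem_c : ∀ d0 ∈ D, ∀ w : W, w ∉ Ud d0 →
    (∀ i : B, d.bruhatLE (d.cs.simple i) d0 →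
      d.cs.length (d.cs.simple i * w) = d.cs.length w + 1) → d0 * w ∉ c
  -- (iia) : each d ∈ D is an involution in a finite parabolic subgroup
  d_inv : ∀ d0 ∈ D, d0 * d0 = 1 ∧ d0 ≠ 1
  d_parabolic : ∀ d0 ∈ D, ∃ I : Set B,
    (Subgroup.closure (d.cs.simple '' I) : Set W).Finite ∧
    d0 ∈ Subgroup.closure (d.cs.simple '' I)
  s_len : ∀ d0 ∈ D, ∀ i : B, d.bruhatLE (d.cs.simple i) d0 →
    ∀ u ∈ Ud d0, d.cs.length (d.cs.simple i * u) = d.cs.length u + 1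
  -- (iib)
  TsC : ∀ d0 ∈ D, ∀ i : B, d.bruhatLE (d.cs.simple i) d0 →
    ∃ a : A Γ, d.T (d.cs.simple i) * d.C d0 - a • d.C d0 ∈ d.Hltc c
  -- (iic)
  h_ne : ∀ d0 ∈ D, d.hk d0 d0 d0 ≠ 0
  -- (iii)
  dU_rightCell : ∀ d0 ∈ D, d.IsRightCell {w : W | ∃ u ∈ Ud d0, w = d0 * u}
  -- (iv)
  TCT : ∀ d0 ∈ D, ∀ b ∈ Bd d0, ∀ u ∈ Ud d0,
    ∃ h0 ∈ d.Hlt0, ∃ h1 ∈ d.Hltc c,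
      d.T b * d.C d0 * d.T u - d.T (b * d0 * u) = h0 + h1

namespace CellDecomp

variable {d : KLData M W Γ H} {c : Set W} (cd : CellDecomp d c)

/-- `F` is the element `F_w` : `F = T_w + Σ_{y ∈ U_d, y < w} p_{y,w} T_y` with
`p_{y,w} ∈ A_{<0}`, and `C_d F ≡ C_{dw} mod H_{<c}`. -/
def IsF (d0 w : W) (F : H) : Prop :=
  (d.bT.repr F w = 1 ∧
    ∀ y : W, y ≠ w → d.bT.repr F y ≠ 0 →
      y ∈ cd.Ud d0 ∧ d.bruhatLT y w ∧ d.bT.repr F y ∈ Alt0 Γ) ∧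
  d.C d0 * F - d.C (d0 * w) ∈ d.Hltc c

/-- The right cell `Φ_{b,d} = b d U_d`. -/
def Phi (b d0 : W) : Set W := {x : W | ∃ u ∈ cd.Ud d0, x = b * d0 * u}

/-- The left cell `Θ_{b,d} = Φ_{b,d}⁻¹`. -/
def Theta (b d0 : W) : Set W := {x : W | ∃ u ∈ cd.Ud d0, x = u⁻¹ * d0 * b⁻¹}

end CellDecomp

/-- The Coxeter matrix of affine type C̃2: generators `s0 s1 s2`,
`(s0 s1)⁴ = (s1 s2)⁴ = (s0 s2)² = 1`. -/
def Ct2 : CoxeterMatrix (Fin 3) where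
  M := !![1, 4, 2; 4, 1, 4; 2, 4, 1]
  isSymm := by decide
  diagonal := by decide
  off_diagonal := by intro i i' h; fin_cases i <;> fin_cases i' <;> simp_all

/-- The Coxeter matrix of affine type G̃2: generators `s0 s1 s2`,
`(s0 s1)³ = (s1 s2)⁶ = (s0 s2)² = 1`. -/
def Gt2 : CoxeterMatrix (Fin 3) where
  M := !![1, 3, 2; 3, 1, 6; 2, 6, 1]
  isSymm := by decide
  diagonal := by decide
  off_diagonal := by intro i i' h; fin_cases i <;> fin_cases i' <;> simp_all

/-- `ξ_γ = q^γ - q^{-γ}`. -/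
def xi (γ : Γ) : A Γ := qe γ - qe (-γ)

/-- `η_γ = q^γ + q^{-γ}`. -/
def eta (γ : Γ) : A Γ := qe γ + qe (-γ)


namespace KLData

variable [Algebra (A Γ) H] (d : KLData M W Γ H)

/-- The free `A ⊗_ℤ A`-module with basis `{E_w : w ∈ c}`. -/
abbrev Emod (Γ : Type) [AddCommGroup Γ] [LinearOrder Γ] [IsOrderedAddMonoid Γ] {W : Type} (c : Set W) :=
  ↥c →₀ (A Γ ⊗[ℤ] A Γ)

/-- `C_x ⬝ E_w = Σ_{z ∈ c} (h_{x,w,z} ⊗ 1) E_z`. -/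
def lactB (c : Set W) (x : W) (w : ↥c) : Emod Γ c :=
  Finsupp.mapRange (fun a => a ⊗ₜ[ℤ] (1 : A Γ)) (by simp)
    ((d.bC.repr (d.C x * d.C (w : W))).subtypeDomain (· ∈ c))

/-- The left action of `C_x` on `E`, extended `(A ⊗ A)`-linearly from the basis. -/
def lact (c : Set W) (x : W) (v : Emod Γ c) : Emod Γ c :=
  v.sum fun w t => t • d.lactB c x w

/-- `E_w ⬝ C_y = Σ_{z ∈ c} (1 ⊗ h_{w,y,z}) E_z`. -/
def ractB (c : Set W) (y : W) (w : ↥c) : Emod Γ c :=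
  Finsupp.mapRange (fun a => (1 : A Γ) ⊗ₜ[ℤ] a) (by simp)
    ((d.bC.repr (d.C (w : W) * d.C y)).subtypeDomain (· ∈ c))

/-- The right action of `C_y` on `E`, extended `(A ⊗ A)`-linearly from the basis. -/
def ract (c : Set W) (y : W) (v : Emod Γ c) : Emod Γ c :=
  v.sum fun w t => t • d.ractB c y w

end KLData

end KL

open KL


section Statement6Helpers

variable {B W : Type} [Group W] {M : CoxeterMatrix B} {Γ : Type}
    [AddCommGroup Γ] [LinearOrder Γ] [IsOrderedAddMonoid Γ] {H : Type} [Ring H] [Algebra (A Γ) H]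

lemma KL6_alt0_zero : (0 : A Γ) ∈ Alt0 Γ := by
  intro γ hγ; simp at hγ

lemma KL6_alt0_neg {a : A Γ} (h : a ∈ Alt0 Γ) : -a ∈ Alt0 Γ := by
  intro γ hγ; exact h γ (by rwa [AddMonoidAlgebra.coeff_neg, Finsupp.support_neg] at hγ)

lemma KL6_alt0_add {a b : A Γ} (ha : a ∈ Alt0 Γ) (hb : b ∈ Alt0 Γ) : a + b ∈ Alt0 Γ := by
  intro γ hγ
  rcases Finset.mem_union.mp (Finsupp.support_add hγ) with h | h
  · exact ha γ h
  · exact hb γ h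

lemma KL6_alt0_mul {a b : A Γ} (ha : a ∈ Alt0 Γ) (hb : b ∈ Alt0 Γ) : a * b ∈ Alt0 Γ := by
  intro γ hγ
  obtain ⟨γ₁, h₁, γ₂, h₂, rfl⟩ := Finset.mem_add.mp (AddMonoidAlgebra.support_coeff_mul_subset a b hγ)
  exact add_neg (ha γ₁ h₁) (hb γ₂ h₂)

lemma KL6_alt0_sum {ι : Type*} {s : Finset ι} {f : ι → A Γ}
    (h : ∀ i ∈ s, f i ∈ Alt0 Γ) : ∑ i ∈ s, f i ∈ Alt0 Γ := by
  classical
  induction s using Finset.induction_on with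
  | empty => simpa using (KL6_alt0_zero (Γ := Γ))
  | insert _ _ hx ih =>
    rw [Finset.sum_insert hx]
    exact KL6_alt0_add (h _ (Finset.mem_insert_self _ _))
      (ih fun i hi => h i (Finset.mem_insert_of_mem hi))

lemma KL6_bruhatLE_length (d : KLData M W Γ H) {x y : W} (h : d.bruhatLE x y) :
    d.cs.length x ≤ d.cs.length y := by
  induction h with
  | refl => exact le_refl _
  | tail h step ih => obtain ⟨t, -, -, hlt⟩ := step; exact ih.trans hlt.le

lemma KL6_bruhatLT_length (d : KLData M W Γ H) {x y : W} (h : d.bruhatLT x y) :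
    d.cs.length x < d.cs.length y := by
  obtain ⟨hle, hne⟩ := h
  rcases Relation.ReflTransGen.cases_tail hle with rfl | ⟨z, hz, t, -, -, hlt⟩
  · exact absurd rfl hne
  · exact lt_of_le_of_lt (KL6_bruhatLE_length d hz) hlt

lemma KL6_bruhatLT_trans (d : KLData M W Γ H) {x y z : W}
    (h1 : d.bruhatLT x y) (h2 : d.bruhatLT y z) : d.bruhatLT x z := by
  refine ⟨h1.1.trans h2.1, ?_⟩
  rintro rfl
  exact absurd ((KL6_bruhatLT_length d h1).trans (KL6_bruhatLT_length d h2)) (lt_irrefl _)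

lemma KL6_Hltc_repr (d : KLData M W Γ H) {c : Set W} {h : H} (hh : h ∈ d.Hltc c)
    {w : W} (hw : w ∈ c) : d.bC.repr h w = 0 := by
  have hle : d.Hltc c ≤ LinearMap.ker
      ((Finsupp.lapply w).comp (d.bC.repr : H →ₗ[A Γ] (W →₀ A Γ))) := by
    rw [KLData.Hltc, Submodule.span_le]
    rintro _ ⟨z, hz, rfl⟩
    simp only [SetLike.mem_coe, LinearMap.mem_ker, LinearMap.comp_apply, Finsupp.lapply_apply,
      LinearEquiv.coe_coe]
    rw [KLData.C, Module.Basis.repr_self, Finsupp.single_apply]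
    exact if_neg (fun he => hz.1 (by rwa [he]))
  exact hle hh

lemma KL6_mem_c {d : KLData M W Γ H} {c : Set W} (cd : CellDecomp d c)
    {d0 : W} (hd0 : d0 ∈ cd.D) {u' : W} (hu' : u' ∈ cd.Ud d0) : d0 * u' ∈ c := by
  rw [cd.c_eq]
  exact Set.mem_iUnion₂.mpr ⟨d0, hd0, ⟨1, cd.one_mem_B d0 hd0, u', hu', by rw [one_mul]⟩⟩

/-- Construction of the exact expansion `T_v = Σ q_{u',v} F_{u'}`. -/
lemma KL6_exists_exact_qf (d : KLData M W Γ H) (c : Set W) (cd : CellDecomp d c)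
    (d0 : W) (u : W) (F : W → H)
    (hF : ∀ u' : W, u' = u ∨ (u' ∈ cd.Ud d0 ∧ d.bruhatLT u' u) → cd.IsF d0 u' (F u')) :
    ∀ n : ℕ, ∀ v : W, d.cs.length v < n → (v = u ∨ (v ∈ cd.Ud d0 ∧ d.bruhatLT v u)) →
    ∃ qf : W →₀ A Γ, qf v = 1 ∧
      (∀ u' : W, u' ≠ v → qf u' ∈ Alt0 Γ ∧ (qf u' ≠ 0 → u' ∈ cd.Ud d0 ∧ d.bruhatLT u' v)) ∧
      d.T v = Finsupp.linearCombination (A Γ) F qf := by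
  intro n
  induction n with
  | zero => intro v hv; exact absurd hv (Nat.not_lt_zero _)
  | succ n ih =>
    intro v hvn hv
    obtain ⟨⟨hPv, hPy⟩, -⟩ := hF v hv
    set P := d.bT.repr (F v) with hP
    have hyinfo : ∀ y ∈ P.support.erase v,
        d.bruhatLT y v ∧ P y ∈ Alt0 Γ ∧ y ∈ cd.Ud d0 := by
      intro y hy
      have hyne : y ≠ v := Finset.ne_of_mem_erase hy
      have hyP : P y ≠ 0 := Finsupp.mem_support_iff.mp (Finset.mem_of_mem_erase hy)
      obtain ⟨h1, h2, h3⟩ := hPy y hyne hyP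
      exact ⟨h2, h3, h1⟩
    have key : ∀ y ∈ P.support.erase v, ∃ qf : W →₀ A Γ, qf y = 1 ∧
        (∀ u' : W, u' ≠ y → qf u' ∈ Alt0 Γ ∧ (qf u' ≠ 0 → u' ∈ cd.Ud d0 ∧ d.bruhatLT u' y)) ∧
        d.T y = Finsupp.linearCombination (A Γ) F qf := by
      intro y hy
      obtain ⟨hylt, -, hyU⟩ := hyinfo y hy
      have hyS : y = u ∨ (y ∈ cd.Ud d0 ∧ d.bruhatLT y u) := by
        rcases hv with rfl | ⟨-, hvu⟩
        · exact Or.inr ⟨hyU, hylt⟩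
        · exact Or.inr ⟨hyU, KL6_bruhatLT_trans d hylt hvu⟩
      exact ih y (lt_of_lt_of_le (KL6_bruhatLT_length d hylt) (Nat.lt_succ_iff.mp hvn)) hyS
    choose! g hg1 hg2 hg3 using key
    refine ⟨(Finsupp.single v 1 - ∑ y ∈ P.support.erase v, P y • g y : W →₀ A Γ), ?_, ?_, ?_⟩
    · rw [Finsupp.sub_apply, Finsupp.single_eq_same, Finset.sum_apply',
        Finset.sum_eq_zero, sub_zero]
      intro y hy
      rw [Finsupp.smul_apply]
      have hg0 : g y v = 0 := by
        by_contra hne0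
        have hvy := (hg2 y hy v (Ne.symm (Finset.ne_of_mem_erase hy))).2 hne0
        exact absurd ((KL6_bruhatLT_length d hvy.2).trans
          (KL6_bruhatLT_length d (hyinfo y hy).1)) (lt_irrefl _)
      rw [hg0, smul_zero]
    · intro u' hne
      have happ : ((Finsupp.single v 1 - ∑ y ∈ P.support.erase v, P y • g y : W →₀ A Γ)) u'
          = - ∑ y ∈ P.support.erase v, P y * g y u' := by
        rw [Finsupp.sub_apply, Finsupp.single_apply, if_neg (fun h => hne h.symm),
          Finset.sum_apply', zero_sub]
        congr 1
      constructor
      · rw [happ]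
        refine KL6_alt0_neg (KL6_alt0_sum fun y hy => ?_)
        by_cases hcase : u' = y
        · subst hcase
          rw [hg1 u' hy, mul_one]
          exact (hyinfo u' hy).2.1
        · by_cases h0 : g y u' = 0
          · rw [h0, mul_zero]; exact KL6_alt0_zero
          · exact KL6_alt0_mul (hyinfo y hy).2.1 ((hg2 y hy u' hcase).1)
      · intro hqf
        rw [happ, neg_ne_zero] at hqf
        obtain ⟨y, hy, hterm⟩ := Finset.exists_ne_zero_of_sum_ne_zero hqf
        have hgne : g y u' ≠ 0 := fun h => hterm (by rw [h, mul_zero])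
        by_cases hcase : u' = y
        · subst hcase
          exact ⟨(hyinfo u' hy).2.2, (hyinfo u' hy).1⟩
        · obtain ⟨hU, hlt⟩ := (hg2 y hy u' hcase).2 hgne
          exact ⟨hU, KL6_bruhatLT_trans d hlt (hyinfo y hy).1⟩
    · rw [map_sub, Finsupp.linearCombination_single, one_smul, map_sum]
      have hterm : ∀ y ∈ P.support.erase v,
          Finsupp.linearCombination (A Γ) F (P y • g y) = P y • d.T y := by
        intro y hy
        rw [map_smul, ← hg3 y hy]
      rw [Finset.sum_congr rfl hterm]
      have hFv : F v = ∑ y ∈ P.support, P y • d.bT y := by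
        conv_lhs => rw [← d.bT.linearCombination_repr (F v)]
        rw [Finsupp.linearCombination_apply, Finsupp.sum, ← hP]
      have hvmem : v ∈ P.support := Finsupp.mem_support_iff.mpr (by rw [hPv]; exact one_ne_zero)
      rw [hFv, ← Finset.add_sum_erase _ _ hvmem, hPv, one_smul]
      show d.bT v = d.bT v + (∑ y ∈ P.support.erase v, P y • d.bT y)
        - ∑ y ∈ P.support.erase v, P y • d.bT y
      rw [add_sub_cancel_right]

/-- Uniqueness of the expansion mod `H_{<c}`. -/
lemma KL6_qf_unique (d : KLData M W Γ H) (c : Set W) (cd : CellDecomp d c)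
    (d0 : W) (hd0 : d0 ∈ cd.D) (u : W) (hu : u ∈ cd.Ud d0) (F : W → H)
    (hF : ∀ u' : W, u' = u ∨ (u' ∈ cd.Ud d0 ∧ d.bruhatLT u' u) → cd.IsF d0 u' (F u'))
    (qf1 qf2 : W →₀ A Γ)
    (h1 : (qf1 u = 1 ∧ ∀ u' : W, u' ≠ u → qf1 u' ∈ Alt0 Γ ∧
          (qf1 u' ≠ 0 → u' ∈ cd.Ud d0 ∧ d.bruhatLT u' u)) ∧
      d.C d0 * d.T u - qf1.sum (fun u' a => a • (d.C d0 * F u')) ∈ d.Hltc c)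
    (h2 : (qf2 u = 1 ∧ ∀ u' : W, u' ≠ u → qf2 u' ∈ Alt0 Γ ∧
          (qf2 u' ≠ 0 → u' ∈ cd.Ud d0 ∧ d.bruhatLT u' u)) ∧
      d.C d0 * d.T u - qf2.sum (fun u' a => a • (d.C d0 * F u')) ∈ d.Hltc c) :
    qf1 = qf2 := by
  set a := qf1 - qf2 with ha
  have haS : ∀ u', a u' ≠ 0 → (u' = u ∨ (u' ∈ cd.Ud d0 ∧ d.bruhatLT u' u)) := by
    intro u' hne
    by_cases hcase : u' = u
    · exact Or.inl hcase
    · have hor : qf1 u' ≠ 0 ∨ qf2 u' ≠ 0 := by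
        by_contra hc
        push_neg at hc
        exact hne (by rw [ha, Finsupp.sub_apply, hc.1, hc.2, sub_self])
      rcases hor with h | h
      · exact Or.inr ((h1.1.2 u' hcase).2 h)
      · exact Or.inr ((h2.1.2 u' hcase).2 h)
  have h' : a.sum (fun u' x => x • (d.C d0 * F u')) ∈ d.Hltc c := by
    have hmem := Submodule.sub_mem _ h2.2 h1.2
    rw [sub_sub_sub_cancel_left] at hmem
    rwa [ha, Finsupp.sum_sub_index (fun u' b1 b2 => sub_smul b1 b2 _)]
  have hmem2 : a.sum (fun u' x => x • d.C (d0 * u')) ∈ d.Hltc c := by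
    have hdiff : a.sum (fun u' x => x • (d.C d0 * F u' - d.C (d0 * u'))) ∈ d.Hltc c := by
      apply Submodule.sum_mem
      intro u' hu'
      exact Submodule.smul_mem _ _ ((hF u' (haS u' (Finsupp.mem_support_iff.mp hu'))).2)
    have heq : a.sum (fun u' x => x • d.C (d0 * u'))
        = a.sum (fun u' x => x • (d.C d0 * F u'))
          - a.sum (fun u' x => x • (d.C d0 * F u' - d.C (d0 * u'))) := by
      rw [← Finsupp.sum_sub]
      exact Finsupp.sum_congr fun u' _ => by rw [smul_sub, sub_sub_cancel]
    rw [heq]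
    exact Submodule.sub_mem _ h' hdiff
  have hcoef : ∀ u'' : W, a u'' = 0 := by
    intro u''
    by_contra hne
    have hu''S := haS u'' hne
    have hu''U : u'' ∈ cd.Ud d0 := by
      rcases hu''S with rfl | ⟨h, -⟩
      · exact hu
      · exact h
    have h0 := KL6_Hltc_repr d hmem2 (KL6_mem_c cd hd0 hu''U)
    have hrepr : d.bC.repr (a.sum fun u' x => x • d.C (d0 * u')) (d0 * u'') = a u'' := by
      rw [map_finsuppSum, Finsupp.sum_apply]
      rw [Finsupp.sum_congr (g2 := fun u' x => if u' = u'' then x else 0) ?_]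
      · rw [Finsupp.sum_ite_eq', if_pos (Finsupp.mem_support_iff.mpr hne)]
      · intro u' _
        rw [map_smul]
        simp only [KLData.C, Module.Basis.repr_self, Finsupp.smul_apply, Finsupp.single_apply]
        by_cases hc : u' = u''
        · subst hc; simp
        · rw [if_neg (fun he => hc (mul_left_cancel he)), smul_zero, if_neg hc]
    exact hne (by rw [← hrepr, h0])
  have : a = 0 := Finsupp.ext fun u'' => hcoef u''
  have := sub_eq_zero.mp (by rw [← ha]; exact this)
  exact this

end Statement6Helpers

/-- under Assumption (*), there are unique `q_{u',u} ∈ A` (`q_{u,u} = 1`,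
`q_{u',u} ∈ A_{<0}` for `u' ≠ u`, supported on `u' ∈ U_d`, `u' < u`) with
`C_d T_u ≡ Σ q_{u',u} C_d F_{u'} mod H_{<c}`; consequently
`T_{u⁻¹} C_d ≡ Σ q_{u',u} E_{u'⁻¹} C_d mod H_{<c}`. -/
theorem statement_6 {B W : Type} [Group W] {M : CoxeterMatrix B} {Γ : Type}
    [AddCommGroup Γ] [LinearOrder Γ] [IsOrderedAddMonoid Γ] {H : Type} [Ring H] [Algebra (A Γ) H]
    (d : KLData M W Γ H) (c : Set W) (cd : CellDecomp d c)
    (d0 : W) (hd0 : d0 ∈ cd.D) (u : W) (hu : u ∈ cd.Ud d0)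
    (F : W → H)
    (hF : ∀ u' : W, u' = u ∨ (u' ∈ cd.Ud d0 ∧ d.bruhatLT u' u) → cd.IsF d0 u' (F u')) :
    (∃! qf : W →₀ A Γ,
      (qf u = 1 ∧ ∀ u' : W, u' ≠ u → qf u' ∈ Alt0 Γ ∧
          (qf u' ≠ 0 → u' ∈ cd.Ud d0 ∧ d.bruhatLT u' u)) ∧
      d.C d0 * d.T u - qf.sum (fun u' a => a • (d.C d0 * F u')) ∈ d.Hltc c) ∧
    (∀ qf : W →₀ A Γ,
      ((qf u = 1 ∧ ∀ u' : W, u' ≠ u → qf u' ∈ Alt0 Γ ∧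
          (qf u' ≠ 0 → u' ∈ cd.Ud d0 ∧ d.bruhatLT u' u)) ∧
        d.C d0 * d.T u - qf.sum (fun u' a => a • (d.C d0 * F u')) ∈ d.Hltc c) →
      d.T u⁻¹ * d.C d0 - qf.sum (fun u' a => a • (d.flat (F u') * d.C d0))
        ∈ d.Hltc c) := by
  classical
  obtain ⟨qf0, hq0v, hq0prop, hq0exact⟩ :=
    KL6_exists_exact_qf d c cd d0 u F hF (d.cs.length u + 1) u (Nat.lt_succ_self _) (Or.inl rfl)
  have hq0sum : qf0.sum (fun u' a => a • (d.C d0 * F u')) = d.C d0 * d.T u := by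
    rw [hq0exact, Finsupp.linearCombination_apply, Finsupp.mul_sum]
    exact Finsupp.sum_congr fun u' _ => (mul_smul_comm _ _ _).symm
  have hq0cond : (qf0 u = 1 ∧ ∀ u' : W, u' ≠ u → qf0 u' ∈ Alt0 Γ ∧
      (qf0 u' ≠ 0 → u' ∈ cd.Ud d0 ∧ d.bruhatLT u' u)) ∧
      d.C d0 * d.T u - qf0.sum (fun u' a => a • (d.C d0 * F u')) ∈ d.Hltc c := by
    refine ⟨⟨hq0v, hq0prop⟩, ?_⟩
    rw [hq0sum, sub_self]
    exact Submodule.zero_mem _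
  constructor
  · exact ⟨qf0, hq0cond, fun qf hqf =>
      KL6_qf_unique d c cd d0 hd0 u hu F hF qf qf0 hqf hq0cond⟩
  · intro qf hqf
    have hqf0 : qf = qf0 := KL6_qf_unique d c cd d0 hd0 u hu F hF qf qf0 hqf hq0cond
    subst hqf0
    have hflatT : d.flat (d.T u) = d.T u⁻¹ := d.bT.constr_basis ℕ _ u
    have hflat : d.T u⁻¹ = qf.sum (fun u' a => a • d.flat (F u')) := by
      rw [← hflatT, hq0exact, Finsupp.linearCombination_apply, map_finsuppSum]
      exact Finsupp.sum_congr fun u' _ => map_smul _ _ _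
    have hzero : d.T u⁻¹ * d.C d0 - qf.sum (fun u' a => a • (d.flat (F u') * d.C d0)) = 0 := by
      rw [hflat, Finsupp.sum_mul, sub_eq_zero]
      exact Finsupp.sum_congr fun u' _ => smul_mul_assoc _ _ _
    rw [hzero]
    exact Submodule.zero_mem _
end
end

section
/- Assume c < b in Γ. Then in the Hecke algebra of the affine Weyl group of type C̃2 one has C_{101} = C_1 T_0 C_1 − q^{-b} ξ_c C_1, and explicitly C_{101} = T_{101} + q^{-b}(T_{10} + T_{01}) + q^{-2b} T_0 − q^{-b} ξ_c T_1 − q^{-2b} ξ_c T_e. -/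
open scoped Classical TensorProduct

noncomputable section

open KL

namespace KL

variable {Γ : Type} [AddCommGroup Γ] [LinearOrder Γ] [IsOrderedAddMonoid Γ]

def abar : A Γ ≃ₐ[ℤ] A Γ := AddMonoidAlgebra.domCongr ℤ ℤ (AddEquiv.neg Γ)

@[simp] lemma abar_qe (γ : Γ) : abar (qe γ) = qe (-γ) := by
  simp [abar, qe]

lemma qe_mul (γ δ : Γ) : qe γ * qe δ = qe (γ + δ) := by
  simp [qe, AddMonoidAlgebra.single_mul_single]

lemma qe_zero : qe (0 : Γ) = 1 := rfl

lemma Alt0_zero : (0 : A Γ) ∈ Alt0 Γ := by simp [Alt0]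

lemma Alt0_add {p q : A Γ} (hp : p ∈ Alt0 Γ) (hq : q ∈ Alt0 Γ) : p + q ∈ Alt0 Γ := by
  intro γ hγ
  rcases Finset.mem_union.mp (Finsupp.support_add hγ) with h | h
  · exact hp γ h
  · exact hq γ h

lemma Alt0_neg {p : A Γ} (hp : p ∈ Alt0 Γ) : -p ∈ Alt0 Γ := by
  intro γ hγ
  rw [AddMonoidAlgebra.coeff_neg, Finsupp.support_neg] at hγ; exact hp γ hγ

lemma Alt0_sub {p q : A Γ} (hp : p ∈ Alt0 Γ) (hq : q ∈ Alt0 Γ) : p - q ∈ Alt0 Γ := by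
  rw [sub_eq_add_neg]; exact Alt0_add hp (Alt0_neg hq)

lemma Alt0_qe {γ : Γ} (h : γ < 0) : qe γ ∈ Alt0 Γ := by
  intro δ hδ
  rw [qe, AddMonoidAlgebra.single] at hδ
  rw [Finsupp.support_single_ne_zero γ one_ne_zero] at hδ
  rw [Finset.mem_singleton] at hδ; exact hδ ▸ h

lemma Alt0_intmul {p : A Γ} (hp : p ∈ Alt0 Γ) (n : ℤ) : n • p ∈ Alt0 Γ := by
  intro γ hγ
  exact hp γ (Finsupp.support_smul hγ)

lemma Alt0_mul_ite {p : A Γ} (hp : p ∈ Alt0 Γ) (cond : Prop) [Decidable cond] :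
    p * (if cond then (1 : A Γ) else 0) ∈ Alt0 Γ := by
  split
  · rwa [mul_one]
  · rw [mul_zero]; exact Alt0_zero

lemma abar_eq_self_Alt0 {p : A Γ} (hp : p ∈ Alt0 Γ) (h : abar p = p) : p = 0 := by
  by_contra hne
  obtain ⟨γ, hγ⟩ := (Finsupp.support_nonempty_iff (f := p.coeff)).mpr (by rwa [Ne, AddMonoidAlgebra.coeff_eq_zero])
  have h1 : γ < 0 := hp γ hγ
  have h2 : -γ ∈ p.coeff.support := by
    have hs : (abar p : A Γ).coeff.support = p.coeff.support.map (AddEquiv.neg Γ).toEquiv.toEmbedding := by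
      simpa [abar] using AddMonoidAlgebra.domCongr_support ℤ ℤ (AddEquiv.neg Γ) p
    rw [h] at hs
    rw [hs]
    exact Finset.mem_map.mpr ⟨γ, hγ, rfl⟩
  have h3 := hp _ h2
  have : (0:Γ) < -γ := neg_pos.mpr h1
  exact absurd h3 (not_lt.mpr this.le)


section HeckeAux

open CoxeterSystem

variable {B W : Type} [Group W] {M : CoxeterMatrix B} {Γ : Type}
  [AddCommGroup Γ] [LinearOrder Γ] [IsOrderedAddMonoid Γ] {H : Type} [Ring H] [Algebra (A Γ) H]
  (d : KLData M W Γ H)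

local notation "aM" => algebraMap (A Γ) H

lemma aux_T_one : d.bT 1 = 1 := by
  have h1 : d.bT 1 * d.bT 1 = d.bT 1 := by
    have := d.T_mul 1 1 (by simp)
    rwa [mul_one] at this
  have h2 := d.bar_T 1
  rw [inv_one] at h2
  calc d.bT 1 = 1 * d.bT 1 := (one_mul _).symm
    _ = (d.bar (d.bT 1) * d.bT 1) * d.bT 1 := by rw [h2]
    _ = d.bar (d.bT 1) * (d.bT 1 * d.bT 1) := by rw [mul_assoc]
    _ = d.bar (d.bT 1) * d.bT 1 := by rw [h1]
    _ = 1 := h2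

lemma aux_Ts_sq (i : B) :
    d.bT (d.cs.simple i) * d.bT (d.cs.simple i) =
      xi (d.L (d.cs.simple i)) • d.bT (d.cs.simple i) + 1 := by
  set x := d.bT (d.cs.simple i)
  set ℓ := d.L (d.cs.simple i)
  have hm : aM (qe (-ℓ)) * aM (qe ℓ) = 1 := by
    rw [← map_mul, qe_mul, neg_add_cancel, qe_zero, map_one]
  have hc : x * aM (qe ℓ) = aM (qe ℓ) * x := (Algebra.commutes _ _).symm
  have hq : x * x - aM (qe ℓ) * x + aM (qe (-ℓ)) * x - 1 = 0 := by
    calc x * x - aM (qe ℓ) * x + aM (qe (-ℓ)) * x - 1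
        = (x + aM (qe (-ℓ))) * (x - aM (qe ℓ)) := by
          rw [add_mul, mul_sub, mul_sub, hc, hm]; abel
      _ = 0 := d.T_quad i
  have h4 : xi ℓ • x = aM (qe ℓ) * x - aM (qe (-ℓ)) * x := by
    rw [Algebra.smul_def, xi, map_sub, sub_mul]
  rw [h4]
  have : x * x - (aM (qe ℓ) * x - aM (qe (-ℓ)) * x + 1) =
      x * x - aM (qe ℓ) * x + aM (qe (-ℓ)) * x - 1 := by abel
  exact sub_eq_zero.mp (this ▸ hq)

lemma aux_T_simple_inv (i : B) :
    d.bT (d.cs.simple i) *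
      (d.bT (d.cs.simple i) - aM (xi (d.L (d.cs.simple i)))) = 1 := by
  set x := d.bT (d.cs.simple i)
  set ℓ := d.L (d.cs.simple i)
  have h1 := aux_Ts_sq d i
  rw [mul_sub]
  have hc : x * aM (xi ℓ) = xi ℓ • x := by
    rw [Algebra.smul_def, (Algebra.commutes _ _).symm]
  rw [hc, h1]; abel

lemma aux_bar_T_simple (i : B) :
    d.bar (d.bT (d.cs.simple i)) =
      d.bT (d.cs.simple i) - aM (xi (d.L (d.cs.simple i))) := by
  set x := d.bT (d.cs.simple i)
  have hbar : d.bar x * x = 1 := by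
    have := d.bar_T (d.cs.simple i)
    rwa [d.cs.inv_simple] at this
  calc d.bar x = d.bar x * (x * (x - aM (xi (d.L (d.cs.simple i))))) := by
        rw [aux_T_simple_inv d i, mul_one]
    _ = (d.bar x * x) * (x - aM (xi (d.L (d.cs.simple i)))) := by rw [mul_assoc]
    _ = x - aM (xi (d.L (d.cs.simple i))) := by rw [hbar, one_mul]

lemma aux_bar_algebraMap (p : A Γ) : d.bar (aM p) = aM (abar p) := by
  induction p using AddMonoidAlgebra.induction_linear with
  | zero => simp
  | add f g hf hg => rw [map_add, map_add, map_add, map_add, hf, hg]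
  | single γ n =>
      have h1 : (AddMonoidAlgebra.single γ n : A Γ) = n • qe γ := by
        rw [qe, AddMonoidAlgebra.smul_single', mul_one]
      rw [h1, map_zsmul, map_zsmul, map_zsmul, d.bar_q, map_zsmul, abar_qe]

lemma aux_bar_smul (p : A Γ) (x : H) : d.bar (p • x) = abar p • d.bar x := by
  rw [Algebra.smul_def, map_mul, aux_bar_algebraMap, ← Algebra.smul_def]

end HeckeAux

section TriAux

open CoxeterSystem

variable {B W : Type} [Group W] {M : CoxeterMatrix B} {Γ : Type}
  [AddCommGroup Γ] [LinearOrder Γ] [IsOrderedAddMonoid Γ] {H : Type} [Ring H] [Algebra (A Γ) H]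
  (d : KLData M W Γ H)

local notation "aM" => algebraMap (A Γ) H

lemma aux_mul_span (i : B) (n : ℕ) {x : H}
    (hx : x ∈ Submodule.span (A Γ) (d.bT '' {z | d.cs.length z < n})) :
    d.bT (d.cs.simple i) * x ∈
      Submodule.span (A Γ) (d.bT '' {z | d.cs.length z < n + 1}) := by
  induction hx using Submodule.span_induction with
  | mem y hy =>
      obtain ⟨z, hz, rfl⟩ := hy
      have hz' : d.cs.length z < n := hz
      rcases d.cs.length_simple_mul z i with h | h
      · rw [d.T_mul (d.cs.simple i) z (by rw [d.cs.length_simple]; omega)]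
        exact Submodule.subset_span ⟨_, by simp only [Set.mem_setOf_eq]; omega, rfl⟩
      · -- length (s i * z) + 1 = length z
        set z' := d.cs.simple i * z with hz'def
        have hsz' : d.cs.simple i * z' = z := by
          rw [hz'def, ← mul_assoc, d.cs.simple_mul_simple_self, one_mul]
        have hlz' : d.cs.length z' + 1 = d.cs.length z := h
        have hTz : d.bT (d.cs.simple i) * d.bT z' = d.bT z := by
          have := d.T_mul (d.cs.simple i) z'
            (by rw [d.cs.length_simple, hsz']; omega)
          rwa [hsz'] at this
        have hexp : d.bT (d.cs.simple i) * d.bT z =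
            xi (d.L (d.cs.simple i)) • d.bT z + d.bT z' := by
          calc d.bT (d.cs.simple i) * d.bT z
              = d.bT (d.cs.simple i) * (d.bT (d.cs.simple i) * d.bT z') := by rw [hTz]
            _ = (d.bT (d.cs.simple i) * d.bT (d.cs.simple i)) * d.bT z' := by
                rw [mul_assoc]
            _ = (xi (d.L (d.cs.simple i)) • d.bT (d.cs.simple i) + 1) * d.bT z' := by
                rw [aux_Ts_sq]
            _ = xi (d.L (d.cs.simple i)) • (d.bT (d.cs.simple i) * d.bT z') + d.bT z' := by
                rw [add_mul, one_mul, smul_mul_assoc]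
            _ = xi (d.L (d.cs.simple i)) • d.bT z + d.bT z' := by rw [hTz]
        rw [hexp]
        refine Submodule.add_mem _ (Submodule.smul_mem _ _ ?_) ?_
        · exact Submodule.subset_span ⟨z, by simp only [Set.mem_setOf_eq]; omega, rfl⟩
        · exact Submodule.subset_span ⟨z', by simp only [Set.mem_setOf_eq]; omega, rfl⟩
  | zero => rw [mul_zero]; exact Submodule.zero_mem _
  | add x y hx hy ihx ihy => rw [mul_add]; exact Submodule.add_mem _ ihx ihy
  | smul a x hx ih => rw [mul_smul_comm]; exact Submodule.smul_mem _ _ ih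

lemma aux_triangular_aux (ω : List B) (hred : d.cs.length (d.cs.wordProd ω) = ω.length) :
    d.bar (d.bT (d.cs.wordProd ω)) - d.bT (d.cs.wordProd ω) ∈
      Submodule.span (A Γ) (d.bT '' {z | d.cs.length z < ω.length}) := by
  induction ω with
  | nil =>
      rw [d.cs.wordProd_nil, aux_T_one, map_one, sub_self]
      exact Submodule.zero_mem _
  | cons i ω' ih =>
      have hlen0 : d.cs.length (d.cs.wordProd (i :: ω')) = ω'.length + 1 := by
        rw [hred]; simp
      have hlen' : d.cs.length (d.cs.wordProd ω') = ω'.length := by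
        have h1 := d.cs.length_wordProd_le ω'
        have h2 : d.cs.length (d.cs.wordProd (i :: ω')) ≤
            1 + d.cs.length (d.cs.wordProd ω') := by
          rw [d.cs.wordProd_cons]
          have := d.cs.length_mul_le (d.cs.simple i) (d.cs.wordProd ω')
          rwa [d.cs.length_simple] at this
        omega
      have hmul : d.cs.length (d.cs.simple i * d.cs.wordProd ω') =
          d.cs.length (d.cs.simple i) + d.cs.length (d.cs.wordProd ω') := by
        rw [d.cs.length_simple, ← d.cs.wordProd_cons, hlen0, hlen']
        omega
      have hT : d.bT (d.cs.wordProd (i :: ω')) =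
          d.bT (d.cs.simple i) * d.bT (d.cs.wordProd ω') := by
        rw [d.cs.wordProd_cons, ← d.T_mul _ _ hmul]
      have hE := ih hlen'
      set E := d.bar (d.bT (d.cs.wordProd ω')) - d.bT (d.cs.wordProd ω') with hEdef
      have hbarT : d.bar (d.bT (d.cs.wordProd ω')) = d.bT (d.cs.wordProd ω') + E := by
        rw [hEdef]; abel
      have key : d.bar (d.bT (d.cs.wordProd (i :: ω'))) - d.bT (d.cs.wordProd (i :: ω')) =
          d.bT (d.cs.simple i) * E
            - xi (d.L (d.cs.simple i)) • d.bT (d.cs.wordProd ω')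
            - xi (d.L (d.cs.simple i)) • E := by
        rw [hT, map_mul, aux_bar_T_simple, hbarT]
        rw [sub_mul, mul_add, mul_add, Algebra.smul_def, Algebra.smul_def]
        abel
      rw [key]
      have m1 : d.bT (d.cs.simple i) * E ∈
          Submodule.span (A Γ) (d.bT '' {z | d.cs.length z < ω'.length + 1}) :=
        aux_mul_span d i ω'.length hE
      have m2 : d.bT (d.cs.wordProd ω') ∈
          Submodule.span (A Γ) (d.bT '' {z | d.cs.length z < ω'.length + 1}) :=
        Submodule.subset_span ⟨_, by simp only [Set.mem_setOf_eq]; omega, rfl⟩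
      have m3 : E ∈ Submodule.span (A Γ) (d.bT '' {z | d.cs.length z < ω'.length + 1}) := by
        refine Submodule.span_mono ?_ hE
        exact Set.image_mono (fun z hz => by simp only [Set.mem_setOf_eq] at *; omega)
      have : ((i :: ω').length : ℕ) = ω'.length + 1 := by simp
      rw [this]
      exact Submodule.sub_mem _ (Submodule.sub_mem _ m1 (Submodule.smul_mem _ _ m2))
        (Submodule.smul_mem _ _ m3)

lemma aux_triangular (w : W) :
    d.bar (d.bT w) - d.bT w ∈
      Submodule.span (A Γ) (d.bT '' {z | d.cs.length z < d.cs.length w}) := by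
  obtain ⟨ω, hω, rfl⟩ := d.cs.exists_reduced_word w
  have := aux_triangular_aux d ω hω
  rwa [show d.cs.length (d.cs.wordProd ω) = ω.length from hω]

lemma aux_bar_fixed_zero (h : H) (hbar : d.bar h = h)
    (hlt : ∀ y : W, d.bT.repr h y ∈ Alt0 Γ) : h = 0 := by
  by_contra hne
  have hsupp : (d.bT.repr h).support.Nonempty := by
    rw [Finsupp.support_nonempty_iff]
    intro h0
    exact hne (by simpa using congrArg d.bT.repr.symm h0)
  obtain ⟨y0, hy0mem, hy0max⟩ :=
    Finset.exists_max_image (d.bT.repr h).support (fun y => d.cs.length y) hsupp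
  have hrepr : h = (d.bT.repr h).sum fun y a => a • d.bT y := by
    conv_lhs => rw [← d.bT.linearCombination_repr h]
    rw [Finsupp.linearCombination_apply]
  have hbar2 : h = (d.bT.repr h).support.sum
      fun y => abar (d.bT.repr h y) • d.bar (d.bT y) := by
    conv_lhs => rw [← hbar, hrepr]
    rw [Finsupp.sum, map_sum]
    exact Finset.sum_congr rfl fun y _ => aux_bar_smul d _ _
  have heval : d.bT.repr h y0 = abar (d.bT.repr h y0) := by
    conv_lhs => rw [hbar2]
    rw [map_sum, Finset.sum_apply']
    have key : ∀ y ∈ (d.bT.repr h).support,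
        d.bT.repr (abar (d.bT.repr h y) • d.bar (d.bT y)) y0 =
          abar (d.bT.repr h y) * (if y = y0 then 1 else 0) := by
      intro y hy
      have hE : d.bar (d.bT y) = d.bT y + (d.bar (d.bT y) - d.bT y) := by abel
      have h0 : d.bT.repr (d.bar (d.bT y) - d.bT y) y0 = 0 := by
        have hm := aux_triangular d y
        rw [Module.Basis.mem_span_image] at hm
        rw [← Finsupp.notMem_support_iff]
        intro hc
        have h1 := hm hc
        simp only [Set.mem_setOf_eq] at h1
        have h2 : d.cs.length y ≤ d.cs.length y0 := hy0max y hy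
        omega
      rw [hE, smul_add, map_add, Finsupp.add_apply, map_smul, map_smul,
        Finsupp.smul_apply, Finsupp.smul_apply, h0, smul_zero, add_zero,
        d.bT.repr_self, Finsupp.single_apply, smul_eq_mul]
    rw [Finset.sum_congr rfl key]
    rw [Finset.sum_eq_single_of_mem y0 hy0mem]
    · rw [if_pos rfl, mul_one]
    · intro y hy hyne
      rw [if_neg hyne, mul_zero]
  have := abar_eq_self_Alt0 (hlt y0) heval.symm
  rw [Finsupp.mem_support_iff] at hy0mem
  exact hy0mem this

lemma aux_C_unique (w : W) (X : H) (hbar : d.bar X = X)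
    (hlt : ∀ y : W, d.bT.repr (X - d.bT w) y ∈ Alt0 Γ) : X = d.C w := by
  have h0 : X - d.C w = 0 := by
    apply aux_bar_fixed_zero d
    · rw [map_sub, hbar]
      have : d.bar (d.C w) = d.C w := d.bar_C w
      rw [this]
    · intro y
      have : X - d.C w = (X - d.bT w) - (d.C w - d.bT w) := by abel
      rw [this, map_sub, Finsupp.sub_apply]
      exact Alt0_sub (hlt y) (d.C_mod w y)
  have := sub_eq_zero.mp h0
  exact this

end TriAux

section Ct2Aux

/-- edge reflection of the square -/
def pE : Equiv.Perm (Fin 4) := Equiv.swap 0 1 * Equiv.swap 2 3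
/-- vertex reflection of the square -/
def pV : Equiv.Perm (Fin 4) := Equiv.swap 1 3
/-- lift data for the Ct2 matrix -/
def fCt2 : Fin 3 → Equiv.Perm (Fin 4) := ![pE, pV, pE]

lemma fCt2_liftable : Ct2.IsLiftable fCt2 := by
  unfold CoxeterMatrix.IsLiftable
  decide

variable {W : Type} [Group W] (cs : CoxeterSystem Ct2 W)

lemma ct2_ne_one : cs.simple 1 * cs.simple 0 ≠ 1 := by
  intro hcon
  have h := congrArg (cs.lift ⟨fCt2, fCt2_liftable⟩) hcon
  rw [map_mul, map_one, cs.lift_apply_simple, cs.lift_apply_simple] at h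
  exact absurd h (by decide)

lemma ct2_ne_one' : cs.simple 0 * cs.simple 1 ≠ 1 := by
  intro hcon
  have h := congrArg (cs.lift ⟨fCt2, fCt2_liftable⟩) hcon
  rw [map_mul, map_one, cs.lift_apply_simple, cs.lift_apply_simple] at h
  exact absurd h (by decide)

lemma ct2_101_ne (j : Fin 3) : cs.simple 1 * cs.simple 0 * cs.simple 1 ≠ cs.simple j := by
  intro hcon
  have h := congrArg (cs.lift ⟨fCt2, fCt2_liftable⟩) hcon
  simp only [map_mul, cs.lift_apply_simple] at h
  have hall : ∀ j : Fin 3, fCt2 1 * fCt2 0 * fCt2 1 ≠ fCt2 j := by decide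
  exact hall j h

lemma ct2_len10 : cs.length (cs.simple 1 * cs.simple 0) = 2 := by
  rcases cs.length_mul_simple (cs.simple 1) 0 with h | h
  · rw [cs.length_simple] at h; omega
  · rw [cs.length_simple] at h
    have h0 : cs.length (cs.simple 1 * cs.simple 0) = 0 := by omega
    rw [cs.length_eq_zero_iff] at h0
    exact absurd h0 (ct2_ne_one cs)

lemma ct2_len01 : cs.length (cs.simple 0 * cs.simple 1) = 2 := by
  rcases cs.length_mul_simple (cs.simple 0) 1 with h | h
  · rw [cs.length_simple] at h; omega
  · rw [cs.length_simple] at h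
    have h0 : cs.length (cs.simple 0 * cs.simple 1) = 0 := by omega
    rw [cs.length_eq_zero_iff] at h0
    exact absurd h0 (ct2_ne_one' cs)

lemma ct2_len101 : cs.length (cs.simple 1 * cs.simple 0 * cs.simple 1) = 3 := by
  rcases cs.length_mul_simple (cs.simple 1 * cs.simple 0) 1 with h | h
  · rw [ct2_len10 cs] at h; omega
  · rw [ct2_len10 cs] at h
    have h1 : cs.length (cs.simple 1 * cs.simple 0 * cs.simple 1) = 1 := by omega
    rw [cs.length_eq_one_iff] at h1
    obtain ⟨j, hj⟩ := h1
    exact absurd hj (ct2_101_ne cs j)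

end Ct2Aux

end KL


/-- in type C̃2 with `c < b`,
`C_{101} = C_1 T_0 C_1 - q^{-b} ξ_c C_1`, explicitly
`C_{101} = T_{101} + q^{-b}(T_{10} + T_{01}) + q^{-2b} T_0 - q^{-b} ξ_c T_1 - q^{-2b} ξ_c T_e`. -/
theorem statement_14 {W : Type} [Group W] {Γ : Type}
    [AddCommGroup Γ] [LinearOrder Γ] [IsOrderedAddMonoid Γ] {H : Type} [Ring H] [Algebra (A Γ) H] (d : KLData Ct2 W Γ H)
    (a b c : Γ) (ha : 0 < a) (hb : 0 < b) (hc : 0 < c)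
    (s0 s1 s2 : W) (hs0 : s0 = d.cs.simple 0) (hs1 : s1 = d.cs.simple 1)
    (hs2 : s2 = d.cs.simple 2)
    (hL0 : d.L s0 = c) (hL1 : d.L s1 = b) (hL2 : d.L s2 = a) (hcb : c < b) :
    d.C (s1 * s0 * s1) =
      d.C s1 * d.T s0 * d.C s1 - (qe (-b) * xi c) • d.C s1 ∧
    d.C (s1 * s0 * s1) =
      d.T (s1 * s0 * s1) + qe (-b) • (d.T (s1 * s0) + d.T (s0 * s1))
        + qe (-(b + b)) • d.T s0 - (qe (-b) * xi c) • d.T s1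
        - (qe (-(b + b)) * xi c) • d.T 1 := by
  subst hs0
  subst hs1
  subst hs2
  have hTdef : ∀ w : W, d.T w = d.bT w := fun _ => rfl
  -- basic products in A
  have hq1 : qe b * qe (-b) = (1 : A Γ) := by rw [qe_mul, add_neg_cancel, qe_zero]
  have hq2 : qe (-(b+b)) = qe (-b) * qe (-b) := by rw [qe_mul, neg_add]
  -- lengths and T-products
  have hl10 := ct2_len10 d.cs
  have hl01 := ct2_len01 d.cs
  have hl101 := ct2_len101 d.cs
  have hT10 : d.bT (d.cs.simple 1) * d.bT (d.cs.simple 0) =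
      d.bT (d.cs.simple 1 * d.cs.simple 0) :=
    d.T_mul _ _ (by rw [hl10, d.cs.length_simple, d.cs.length_simple])
  have hT01 : d.bT (d.cs.simple 0) * d.bT (d.cs.simple 1) =
      d.bT (d.cs.simple 0 * d.cs.simple 1) :=
    d.T_mul _ _ (by rw [hl01, d.cs.length_simple, d.cs.length_simple])
  have hT101 : d.bT (d.cs.simple 1 * d.cs.simple 0) * d.bT (d.cs.simple 1) =
      d.bT (d.cs.simple 1 * d.cs.simple 0 * d.cs.simple 1) :=
    d.T_mul _ _ (by rw [hl101, hl10, d.cs.length_simple])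
  have hT1sq : d.bT (d.cs.simple 1) * d.bT (d.cs.simple 1) =
      xi b • d.bT (d.cs.simple 1) + 1 := by
    have h := aux_Ts_sq d 1
    rwa [hL1] at h
  -- smul juggling helpers
  have sm1 : ∀ (p : A Γ) (x : H), x * (p • (1:H)) = p • x := by
    intro p x; rw [mul_smul_comm, mul_one]
  have sm2 : ∀ (p : A Γ) (x : H), (p • (1:H)) * x = p • x := by
    intro p x; rw [smul_mul_assoc, one_mul]
  have repr_smul : ∀ (p : A Γ) (w y : W), d.bT.repr (p • d.bT w) y =
      p * (if w = y then 1 else 0) := by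
    intro p w y
    rw [map_smul, Finsupp.smul_apply, d.bT.repr_self, Finsupp.single_apply, smul_eq_mul]
  -- C_{s1}
  have hC1 : d.C (d.cs.simple 1) = d.bT (d.cs.simple 1) + qe (-b) • (1 : H) := by
    refine (aux_C_unique d _ _ ?_ ?_).symm
    · rw [map_add, aux_bar_smul, map_one, aux_bar_T_simple d 1, hL1, abar_qe, neg_neg,
        Algebra.algebraMap_eq_smul_one, xi]
      module
    · intro y
      have heq : (d.bT (d.cs.simple 1) + qe (-b) • (1:H)) - d.bT (d.cs.simple 1)
          = qe (-b) • d.bT 1 := by rw [aux_T_one]; abel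
      rw [heq, repr_smul]
      exact Alt0_mul_ite (Alt0_qe (neg_lt_zero.mpr hb)) _
  -- C1 squared
  have hC1sq : d.C (d.cs.simple 1) * d.C (d.cs.simple 1) = eta b • d.C (d.cs.simple 1) := by
    rw [hC1]
    have e1 : (d.bT (d.cs.simple 1) + qe (-b) • (1:H)) *
        (d.bT (d.cs.simple 1) + qe (-b) • (1:H))
        = d.bT (d.cs.simple 1) * d.bT (d.cs.simple 1)
          + qe (-b) • d.bT (d.cs.simple 1) + qe (-b) • d.bT (d.cs.simple 1)
          + (qe (-b) * qe (-b)) • (1:H) := by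
      rw [mul_add, add_mul, add_mul, sm1, sm2, sm2, smul_smul]
      abel
    rw [e1, hT1sq]
    have sc1 : xi b + qe (-b) + qe (-b) = eta b := by rw [xi, eta]; abel
    have sc2 : (1 : A Γ) + qe (-b) * qe (-b) = eta b * qe (-b) := by
      rw [eta, add_mul, hq1]
    rw [smul_add, smul_smul, ← sc2, ← sc1]
    module
  -- scalar computations
  have habar_sc : abar (qe (-b) * xi c) = -(qe b * xi c) := by
    rw [map_mul, abar_qe, neg_neg, xi, map_sub, abar_qe, abar_qe, neg_neg]
    ring
  have hsc_eta : xi c * eta b = qe b * xi c + qe (-b) * xi c := by rw [eta]; ring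
  -- expansion of the product
  have hXE : d.C (d.cs.simple 1) * d.T (d.cs.simple 0) * d.C (d.cs.simple 1)
      - (qe (-b) * xi c) • d.C (d.cs.simple 1)
    = d.bT (d.cs.simple 1 * d.cs.simple 0 * d.cs.simple 1)
      + qe (-b) • d.bT (d.cs.simple 1 * d.cs.simple 0)
      + qe (-b) • d.bT (d.cs.simple 0 * d.cs.simple 1)
      + (qe (-b) * qe (-b)) • d.bT (d.cs.simple 0)
      - (qe (-b) * xi c) • d.bT (d.cs.simple 1)
      - ((qe (-b) * qe (-b)) * xi c) • (1:H) := by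
    rw [hTdef, hC1]
    have st1 : (d.bT (d.cs.simple 1) + qe (-b) • (1:H)) * d.bT (d.cs.simple 0)
        = d.bT (d.cs.simple 1 * d.cs.simple 0) + qe (-b) • d.bT (d.cs.simple 0) := by
      rw [add_mul, sm2, hT10]
    rw [st1]
    have st2 : (d.bT (d.cs.simple 1 * d.cs.simple 0) + qe (-b) • d.bT (d.cs.simple 0)) *
        (d.bT (d.cs.simple 1) + qe (-b) • (1:H))
        = d.bT (d.cs.simple 1 * d.cs.simple 0 * d.cs.simple 1)
          + qe (-b) • d.bT (d.cs.simple 1 * d.cs.simple 0)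
          + qe (-b) • d.bT (d.cs.simple 0 * d.cs.simple 1)
          + (qe (-b) * qe (-b)) • d.bT (d.cs.simple 0) := by
      rw [mul_add, add_mul, add_mul, hT101, sm1, smul_mul_assoc, hT01, sm1, smul_smul]
      abel
    rw [st2, smul_add, smul_smul]
    have hring : qe (-b) * xi c * qe (-b) = (qe (-b) * qe (-b)) * xi c := by ring
    rw [hring]
    abel
  -- bar invariance of the product expression
  have hbarC1 : d.bar (d.C (d.cs.simple 1)) = d.C (d.cs.simple 1) := d.bar_C _
  have hbarX : d.bar (d.C (d.cs.simple 1) * d.T (d.cs.simple 0) * d.C (d.cs.simple 1)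
      - (qe (-b) * xi c) • d.C (d.cs.simple 1))
      = d.C (d.cs.simple 1) * d.T (d.cs.simple 0) * d.C (d.cs.simple 1)
      - (qe (-b) * xi c) • d.C (d.cs.simple 1) := by
    rw [hTdef, map_sub, map_mul, map_mul, aux_bar_smul, hbarC1,
      aux_bar_T_simple d 0, hL0, habar_sc]
    have hmid : d.C (d.cs.simple 1) * (d.bT (d.cs.simple 0)
          - algebraMap (A Γ) H (xi c)) * d.C (d.cs.simple 1)
        = d.C (d.cs.simple 1) * d.bT (d.cs.simple 0) * d.C (d.cs.simple 1)
          - (xi c * eta b) • d.C (d.cs.simple 1) := by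
      have hcm : d.C (d.cs.simple 1) * algebraMap (A Γ) H (xi c)
          = algebraMap (A Γ) H (xi c) * d.C (d.cs.simple 1) := (Algebra.commutes _ _).symm
      have hterm : d.C (d.cs.simple 1) * algebraMap (A Γ) H (xi c) * d.C (d.cs.simple 1)
          = (xi c * eta b) • d.C (d.cs.simple 1) := by
        rw [hcm, mul_assoc, hC1sq, ← Algebra.smul_def, smul_smul]
      rw [mul_sub, sub_mul, hterm]
    rw [hmid, hsc_eta]
    module
  -- Alt0 membership of the coefficients
  have m1 : qe (-b) ∈ Alt0 Γ := Alt0_qe (neg_lt_zero.mpr hb)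
  have hnb : (-b : Γ) < 0 := neg_lt_zero.mpr hb
  have hnc : (-c : Γ) < 0 := neg_lt_zero.mpr hc
  have hbc : (-b : Γ) + c < 0 := by
    rw [add_comm, ← sub_eq_add_neg]
    exact sub_neg.mpr hcb
  have m2 : qe (-b) * qe (-b) ∈ Alt0 Γ := by
    rw [qe_mul]
    exact Alt0_qe (add_neg_of_neg_of_nonpos hnb hnb.le)
  have m3 : qe (-b) * xi c ∈ Alt0 Γ := by
    have hx : qe (-b) * xi c = qe (-b + c) - qe (-b + -c) := by
      rw [xi, mul_sub, qe_mul, qe_mul]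
    rw [hx]
    exact Alt0_sub (Alt0_qe hbc) (Alt0_qe (add_neg_of_neg_of_nonpos hnb hnc.le))
  have m4 : (qe (-b) * qe (-b)) * xi c ∈ Alt0 Γ := by
    have hvv : qe (-b) * qe (-b) = qe (-b + -b) := qe_mul _ _
    have hx : (qe (-b) * qe (-b)) * xi c = qe (-b + -b + c) - qe (-b + -b + -c) := by
      rw [hvv, xi, mul_sub, qe_mul, qe_mul]
    rw [hx]
    refine Alt0_sub (Alt0_qe ?_) (Alt0_qe ?_)
    · rw [add_assoc]
      exact add_neg_of_neg_of_nonpos hnb hbc.le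
    · exact add_neg_of_neg_of_nonpos (add_neg_of_neg_of_nonpos hnb hnb.le) hnc.le
  -- uniqueness applied
  have hXC : d.C (d.cs.simple 1) * d.T (d.cs.simple 0) * d.C (d.cs.simple 1)
      - (qe (-b) * xi c) • d.C (d.cs.simple 1)
      = d.C (d.cs.simple 1 * d.cs.simple 0 * d.cs.simple 1) := by
    refine aux_C_unique d _ _ hbarX ?_
    intro y
    have hdiff : (d.C (d.cs.simple 1) * d.T (d.cs.simple 0) * d.C (d.cs.simple 1)
        - (qe (-b) * xi c) • d.C (d.cs.simple 1))
        - d.bT (d.cs.simple 1 * d.cs.simple 0 * d.cs.simple 1)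
        = qe (-b) • d.bT (d.cs.simple 1 * d.cs.simple 0)
          + qe (-b) • d.bT (d.cs.simple 0 * d.cs.simple 1)
          + (qe (-b) * qe (-b)) • d.bT (d.cs.simple 0)
          - (qe (-b) * xi c) • d.bT (d.cs.simple 1)
          - ((qe (-b) * qe (-b)) * xi c) • d.bT 1 := by
      rw [hXE, aux_T_one]
      abel
    rw [hdiff, map_sub, map_sub, map_add, map_add, Finsupp.sub_apply, Finsupp.sub_apply,
      Finsupp.add_apply, Finsupp.add_apply, repr_smul, repr_smul, repr_smul, repr_smul,
      repr_smul]
    exact Alt0_sub (Alt0_sub (Alt0_add (Alt0_add (Alt0_mul_ite m1 _) (Alt0_mul_ite m1 _))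
      (Alt0_mul_ite m2 _)) (Alt0_mul_ite m3 _)) (Alt0_mul_ite m4 _)
  constructor
  · exact hXC.symm
  · rw [← hXC, hXE]
    simp only [hTdef]
    rw [aux_T_one, hq2, smul_add]
    abel
end
end
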